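/- For every integer Δ ≥ 4, let H_Δ be the graph obtained from the complete graph K_5 by attaching Δ − 4 new pendant vertices (vertices of degree 1) to each of the five vertices of K_5. Then H_Δ has maximum degree Δ, any two edges of H_Δ are at distance at most 2 from each other, and consequently χ'_s(H_Δ) = |E(H_Δ)| = 5Δ − 10. -/
import Mathlib


/-- Two edges of `G` are at distance at most 2: they share a vertex, or some
edge of `G` shares a vertex with each of them. -/
def NearEdges {V : Type*} (G : SimpleGraph V) (e f : Sym2 V) : Prop :=
  (∃ v, v ∈ e ∧ v ∈ f) ∨ ∃ g ∈ G.edgeSet, (∃ v, v ∈ e ∧ v ∈ g) ∧ (∃ v, v ∈ g ∧ v ∈ f)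

/-- A strong edge coloring of `G`: any two distinct edges at distance at most 2
receive distinct colors. -/
def IsStrongEdgeColoring {V : Type*} (G : SimpleGraph V) (c : Sym2 V → ℕ) : Prop :=
  ∀ e ∈ G.edgeSet, ∀ f ∈ G.edgeSet, e ≠ f → NearEdges G e f → c e ≠ c f

/-- The strong chromatic index `χ'ₛ(G)`: the least `k` such that `G` admits a
strong edge coloring using colors `{0, …, k−1}`. -/
noncomputable def strongChromIndex {V : Type*} (G : SimpleGraph V) : ℕ :=
  sInf {k : ℕ | ∃ c : Sym2 V → ℕ, (∀ e ∈ G.edgeSet, c e < k) ∧ IsStrongEdgeColoring G c}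

/-- The graph `H_Δ` obtained from the complete graph `K₅` (on `Fin 5`) by
attaching `Δ − 4` new pendant vertices to each of its five vertices:
the pendant vertex `(i, t)` is joined precisely to the vertex `i` of `K₅`. -/
def HGraph (Δ : ℕ) : SimpleGraph (Fin 5 ⊕ Fin 5 × Fin (Δ - 4)) :=
  SimpleGraph.fromRel fun x y =>
    (∃ i j : Fin 5, x = Sum.inl i ∧ y = Sum.inl j) ∨
    (∃ i : Fin 5, ∃ p : Fin 5 × Fin (Δ - 4), x = Sum.inl i ∧ y = Sum.inr p ∧ p.1 = i)

/-! ### Auxiliary lemmas -/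

lemma adj_inl_inl {Δ : ℕ} (i j : Fin 5) : (HGraph Δ).Adj (Sum.inl i) (Sum.inl j) ↔ i ≠ j := by
  simp [HGraph, SimpleGraph.fromRel_adj]

lemma adj_inl_inr {Δ : ℕ} (i : Fin 5) (p : Fin 5 × Fin (Δ-4)) :
    (HGraph Δ).Adj (Sum.inl i) (Sum.inr p) ↔ p.1 = i := by
  simp only [HGraph, SimpleGraph.fromRel_adj]
  constructor
  · rintro ⟨-, (⟨_,_,_,h⟩|⟨_,_,_,h,rfl⟩|⟨_,_,h,_⟩|⟨_,_,_,h,_⟩)⟩ <;> simp_all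
  · rintro rfl
    exact ⟨by simp, Or.inl (Or.inr ⟨p.1, p, rfl, rfl, rfl⟩)⟩

lemma adj_inr_inr {Δ : ℕ} (p q : Fin 5 × Fin (Δ-4)) : ¬ (HGraph Δ).Adj (Sum.inr p) (Sum.inr q) := by
  simp [HGraph, SimpleGraph.fromRel_adj]

lemma adj_inr_inl {Δ : ℕ} (i : Fin 5) (p : Fin 5 × Fin (Δ-4)) :
    (HGraph Δ).Adj (Sum.inr p) (Sum.inl i) ↔ p.1 = i := by
  rw [SimpleGraph.adj_comm]; exact adj_inl_inr i p

lemma edge_has_inl {Δ : ℕ} (e : Sym2 (Fin 5 ⊕ Fin 5 × Fin (Δ-4)))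
    (he : e ∈ (HGraph Δ).edgeSet) : ∃ i : Fin 5, Sum.inl i ∈ e := by
  induction e with
  | h x y =>
    rw [SimpleGraph.mem_edgeSet] at he
    cases x with
    | inl i => exact ⟨i, by simp⟩
    | inr p =>
      cases y with
      | inl j => exact ⟨j, by simp⟩
      | inr q => exact absurd he (adj_inr_inr p q)

lemma all_near {Δ : ℕ} :
    ∀ e ∈ (HGraph Δ).edgeSet, ∀ f ∈ (HGraph Δ).edgeSet, NearEdges (HGraph Δ) e f := by
  intro e he f hf
  obtain ⟨i, hi⟩ := edge_has_inl e he
  obtain ⟨j, hj⟩ := edge_has_inl f hf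
  by_cases hij : i = j
  · exact Or.inl ⟨Sum.inl i, hi, hij ▸ hj⟩
  · refine Or.inr ⟨s(Sum.inl i, Sum.inl j), ?_, ⟨Sum.inl i, hi, by simp⟩,
      ⟨Sum.inl j, by simp, hj⟩⟩
    rw [SimpleGraph.mem_edgeSet, adj_inl_inl]
    exact hij

lemma nbhd_inl {Δ : ℕ} (i : Fin 5) :
    (HGraph Δ).neighborSet (Sum.inl i)
      = Sum.inl '' {j | j ≠ i} ∪ Sum.inr '' {p | p.1 = i} := by
  ext x
  cases x with
  | inl j => simp [SimpleGraph.mem_neighborSet, adj_inl_inl, ne_comm]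
  | inr p => simp [SimpleGraph.mem_neighborSet, adj_inl_inr]

lemma nbhd_inr {Δ : ℕ} (p : Fin 5 × Fin (Δ-4)) :
    (HGraph Δ).neighborSet (Sum.inr p) = {Sum.inl p.1} := by
  ext x
  cases x with
  | inl j =>
      simp only [SimpleGraph.mem_neighborSet, adj_inr_inl, Set.mem_singleton_iff,
        Sum.inl.injEq]
      exact ⟨fun h => h.symm, fun h => h.symm⟩
  | inr q => simp [SimpleGraph.mem_neighborSet, adj_inr_inr]

lemma deg_inl {Δ : ℕ} (hΔ : 4 ≤ Δ) (i : Fin 5) :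
    ((HGraph Δ).neighborSet (Sum.inl i)).ncard = Δ := by
  rw [nbhd_inl]
  rw [Set.ncard_union_eq (by
      rw [Set.disjoint_left]; rintro x ⟨j, -, rfl⟩ ⟨p, -, h⟩; exact Sum.inl_ne_inr h.symm)
    (Set.toFinite _) (Set.toFinite _)]
  rw [Set.ncard_image_of_injective _ Sum.inl_injective,
    Set.ncard_image_of_injective _ Sum.inr_injective]
  have h1 : {j : Fin 5 | j ≠ i}.ncard = 4 := by
    have h := Set.ncard_add_ncard_compl ({i} : Set (Fin 5))
    rw [Set.ncard_singleton, Nat.card_eq_fintype_card, Fintype.card_fin] at h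
    have : ({i} : Set (Fin 5))ᶜ = {j : Fin 5 | j ≠ i} := by ext j; simp
    rw [this] at h
    omega
  have h2 : {p : Fin 5 × Fin (Δ-4) | p.1 = i}.ncard = Δ - 4 := by
    have : {p : Fin 5 × Fin (Δ-4) | p.1 = i} = (fun t => (i, t)) '' Set.univ := by
      ext ⟨a, b⟩
      simp [eq_comm, Prod.ext_iff]
    rw [this, Set.ncard_image_of_injective _ (fun a b h => (Prod.ext_iff.1 h).2),
      Set.ncard_univ]
    simp
  rw [h1, h2]
  omega

lemma deg_inr {Δ : ℕ} (p : Fin 5 × Fin (Δ-4)) :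
    ((HGraph Δ).neighborSet (Sum.inr p)).ncard = 1 := by
  rw [nbhd_inr, Set.ncard_singleton]

lemma edge_count {Δ : ℕ} (hΔ : 4 ≤ Δ) : (HGraph Δ).edgeSet.ncard = 5 * Δ - 10 := by
  classical
  have hdeg : ∀ v, (HGraph Δ).degree v = ((HGraph Δ).neighborSet v).ncard := by
    intro v
    rw [← SimpleGraph.card_neighborSet_eq_degree, ← Nat.card_eq_fintype_card,
      Nat.card_coe_set_eq]
  have hsum := SimpleGraph.sum_degrees_eq_twice_card_edges (HGraph Δ)
  rw [Fintype.sum_sum_type] at hsum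
  simp only [hdeg, deg_inl hΔ, deg_inr, Finset.sum_const, Finset.card_univ,
    Fintype.card_fin, Fintype.card_prod, smul_eq_mul, mul_one] at hsum
  have hcard : (HGraph Δ).edgeSet.ncard = (HGraph Δ).edgeFinset.card := by
    rw [SimpleGraph.edgeFinset_card, ← Nat.card_eq_fintype_card, Nat.card_coe_set_eq]
  omega

lemma strong_eq_card {V : Type*} (G : SimpleGraph V) (hfin : G.edgeSet.Finite)
    (hnear : ∀ e ∈ G.edgeSet, ∀ f ∈ G.edgeSet, NearEdges G e f) :
    strongChromIndex G = G.edgeSet.ncard := by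
  classical
  set F := hfin.toFinset with hF
  have hmemF : ∀ e, e ∈ F ↔ e ∈ G.edgeSet := fun e => hfin.mem_toFinset
  have hcard : G.edgeSet.ncard = F.card := Set.ncard_eq_toFinset_card _ hfin
  have hn : F.card ∈ {k : ℕ | ∃ c : Sym2 V → ℕ,
      (∀ e ∈ G.edgeSet, c e < k) ∧ IsStrongEdgeColoring G c} := by
    refine ⟨fun e => if h : e ∈ F then (F.equivFin ⟨e, h⟩ : ℕ) else 0, ?_, ?_⟩
    · intro e he
      dsimp only
      rw [dif_pos ((hmemF e).2 he)]
      exact (F.equivFin _).isLt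
    · intro e he f hf hne _
      dsimp only
      rw [dif_pos ((hmemF e).2 he), dif_pos ((hmemF f).2 hf)]
      intro h
      exact hne (Subtype.mk_eq_mk.1 (F.equivFin.injective (Fin.val_injective h)))
  refine le_antisymm (hcard ▸ Nat.sInf_le hn) ?_
  rw [hcard]
  refine le_csInf ⟨_, hn⟩ ?_
  rintro k ⟨c, hlt, hcol⟩
  calc F.card ≤ (Finset.range k).card := by
        refine Finset.card_le_card_of_injOn c ?_ ?_
        · intro e he
          exact Finset.mem_range.2 (hlt e ((hmemF e).1 he))
        · intro e he f hf hcef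
          by_contra hne
          exact hcol e ((hmemF e).1 he) f ((hmemF f).1 hf) hne
            (hnear e ((hmemF e).1 he) f ((hmemF f).1 hf)) hcef
    _ = k := Finset.card_range k

/-- For `Δ ≥ 4`, the graph `H_Δ` has maximum degree `Δ`, any two of its edges
are at distance at most 2, and `χ'ₛ(H_Δ) = |E(H_Δ)| = 5Δ − 10`. -/
theorem stmt_13 (Δ : ℕ) (hΔ : 4 ≤ Δ) :
    (∀ v, ((HGraph Δ).neighborSet v).ncard ≤ Δ) ∧
    (∃ v, ((HGraph Δ).neighborSet v).ncard = Δ) ∧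
    (∀ e ∈ (HGraph Δ).edgeSet, ∀ f ∈ (HGraph Δ).edgeSet, NearEdges (HGraph Δ) e f) ∧
    (HGraph Δ).edgeSet.ncard = 5 * Δ - 10 ∧
    strongChromIndex (HGraph Δ) = 5 * Δ - 10 := by
  refine ⟨?_, ⟨Sum.inl 0, deg_inl hΔ 0⟩, all_near, edge_count hΔ, ?_⟩
  · intro v
    cases v with
    | inl i => exact (deg_inl hΔ i).le
    | inr p => rw [deg_inr p]; omega
  · rw [strong_eq_card _ (Set.toFinite _) all_near, edge_count hΔ]
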